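/- Let c > 0 and g : ℝ → ℝ be C¹ with g(0) = 0 and g'(0) = 0 (i.e., g(j) = o(|j|) near 0). Then j ≡ 0 is an isolated-in-amplitude solution in the following sense: there is no sequence of nonzero T-periodic solutions jₖ of j'' + c j + g(j) = 0 with period T < π/√c and sup|jₖ| → 0, sup|jₖ'| → 0. (Equivalently: any T-periodic solution with T < π/√c and sufficiently small C¹ norm is identically zero.) -/

import Mathlib

open Set

/-- left-limit sign of derivative -/
lemma aux_deriv_nonpos_left {u : ℝ → ℝ} {a b : ℝ} (hu : DifferentiableAt ℝ u b)
    (hab : a < b) (hub : u b = 0) (hpos : ∀ s ∈ Set.Ioo a b, 0 < u s) :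
    deriv u b ≤ 0 := by
  have hslope : Filter.Tendsto (slope u b) (nhdsWithin b {b}ᶜ) (nhds (deriv u b)) :=
    hasDerivAt_iff_tendsto_slope.1 hu.hasDerivAt
  have hne : (nhdsWithin b (Set.Ioo a b)).NeBot := by
    apply mem_closure_iff_nhdsWithin_neBot.1
    rw [closure_Ioo hab.ne]
    exact ⟨hab.le, le_rfl⟩
  have hmono : nhdsWithin b (Set.Ioo a b) ≤ nhdsWithin b {b}ᶜ :=
    nhdsWithin_mono _ (fun x hx => (ne_of_lt hx.2))
  refine le_of_tendsto (hslope.mono_left hmono) ?_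
  filter_upwards [self_mem_nhdsWithin] with s hs
  have h1 : 0 < u s := hpos s hs
  have h2 : s - b < 0 := sub_neg.2 hs.2
  rw [slope_def_field, hub, sub_zero]
  exact le_of_lt (div_neg_of_pos_of_neg h1 h2)

lemma aux_contDiff_deriv {u : ℝ → ℝ} (hu : ContDiff ℝ 2 u) : ContDiff ℝ 1 (deriv u) := by
  have h := (contDiff_succ_iff_deriv (n := 1)).mp (by exact_mod_cast hu)
  exact h.2.2

lemma aux_sturm {ω : ℝ} (hω : 0 < ω) {u : ℝ → ℝ} (hu : ContDiff ℝ 2 u)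
    {a b : ℝ} (hab : a < b) (hlen : b - a < Real.pi / ω)
    (hua : u a = 0) (hub : u b = 0)
    (hode : ∀ t ∈ Set.Icc a b, -ω^2 * u t ≤ deriv (deriv u) t)
    (h'b : deriv u b < 0) : False := by
  have hu' : ContDiff ℝ 1 (deriv u) := aux_contDiff_deriv hu
  have hud : ∀ t, HasDerivAt u (deriv u t) t :=
    fun t => (hu.differentiable (by norm_num) t).hasDerivAt
  have hu'd : ∀ t, HasDerivAt (deriv u) (deriv (deriv u) t) t :=
    fun t => (hu'.differentiable one_ne_zero t).hasDerivAt
  set w : ℝ → ℝ := fun t => Real.sin (ω * (t - a)) with hw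
  have hwd : ∀ t, HasDerivAt w (ω * Real.cos (ω * (t - a))) t := by
    intro t
    have h1 : HasDerivAt (fun t : ℝ => ω * (t - a)) ω t := by
      simpa using ((hasDerivAt_id t).sub_const a).const_mul ω
    exact ((Real.hasDerivAt_sin (ω * (t - a))).comp t h1).congr_deriv (mul_comm _ _)
  have hw'd : ∀ t, HasDerivAt (fun t => ω * Real.cos (ω * (t - a)))
      (-(ω^2 * Real.sin (ω * (t - a)))) t := by
    intro t
    have h1 : HasDerivAt (fun t : ℝ => ω * (t - a)) ω t := by
      simpa using ((hasDerivAt_id t).sub_const a).const_mul ω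
    have := ((Real.hasDerivAt_cos (ω * (t - a))).comp t h1).const_mul ω
    refine this.congr_deriv ?_
    ring
  set W : ℝ → ℝ := fun t => deriv u t * w t - u t * (ω * Real.cos (ω * (t - a))) with hW
  have hWd : ∀ t, HasDerivAt W
      (deriv (deriv u) t * w t + ω^2 * u t * w t) t := by
    intro t
    have h1 := ((hu'd t).mul (hwd t)).sub ((hud t).mul (hw'd t))
    refine h1.congr_deriv ?_
    ring
  have hmono : MonotoneOn W (Set.Icc a b) := by
    apply monotoneOn_of_deriv_nonneg (convex_Icc a b)
    · exact fun t _ => ((hWd t).differentiableAt.continuousAt).continuousWithinAt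
    · intro t ht
      exact ((hWd t).differentiableAt).differentiableWithinAt
    · intro t ht
      rw [interior_Icc] at ht
      rw [(hWd t).deriv]
      have hw0 : 0 ≤ w t := by
        apply Real.sin_nonneg_of_nonneg_of_le_pi
        · exact mul_nonneg hω.le (by linarith [ht.1])
        · have : t - a < Real.pi / ω := lt_of_le_of_lt (by linarith [ht.2]) hlen
          calc ω * (t - a) ≤ ω * (Real.pi / ω) := by nlinarith
            _ = Real.pi := by field_simp
      have := hode t (Set.mem_Icc.2 ⟨ht.1.le, ht.2.le⟩)
      nlinarith
  have hWa : W a = 0 := by simp [hW, hw, hua]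
  have hWb : W b < 0 := by
    have hsin : 0 < Real.sin (ω * (b - a)) := by
      apply Real.sin_pos_of_pos_of_lt_pi
      · exact mul_pos hω (by linarith)
      · calc ω * (b - a) < ω * (Real.pi / ω) := by
              apply mul_lt_mul_of_pos_left hlen hω
          _ = Real.pi := by field_simp
    have : W b = deriv u b * Real.sin (ω * (b - a)) := by simp [hW, hw, hub]
    rw [this]
    exact mul_neg_of_neg_of_pos h'b hsin
  have := hmono (Set.left_mem_Icc.2 hab.le) (Set.right_mem_Icc.2 hab.le) hab.le
  linarith [hWa ▸ this]
open Set

lemma aux_omega {c : ℝ} (hc : 0 < c) : Real.sqrt (c + c / 4) < 2 * Real.sqrt c := by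
  have h4 : Real.sqrt 4 = 2 := by
    rw [show (4:ℝ) = 2 ^ 2 by norm_num, Real.sqrt_sq (by norm_num)]
  have h1 : Real.sqrt (c + c / 4) < Real.sqrt (4 * c) :=
    Real.sqrt_lt_sqrt (by positivity) (by linarith)
  rwa [Real.sqrt_mul (by norm_num) c, h4] at h1

set_option maxHeartbeats 1000000 in
theorem stmt_10 (c : ℝ) (hc : 0 < c) (g : ℝ → ℝ) (hg : ContDiff ℝ 1 g)
    (hg0 : g 0 = 0) (hg'0 : deriv g 0 = 0) :
    ∃ ε > 0, ∀ (j : ℝ → ℝ) (T : ℝ), ContDiff ℝ 2 j →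
      (∀ t : ℝ, deriv (deriv j) t + c * j t + g (j t) = 0) →
      0 < T → T < Real.pi / Real.sqrt c → Function.Periodic j T →
      (∀ t : ℝ, |j t| ≤ ε ∧ |deriv j t| ≤ ε) →
      ∀ t : ℝ, j t = 0 := by
  classical
  set δ : ℝ := c / 4 with hδdef
  have hδpos : 0 < δ := by positivity
  -- choose ε such that |deriv g| ≤ δ on [-ε, ε]
  obtain ⟨ε, hεpos, hgd⟩ : ∃ ε > 0, ∀ u : ℝ, |u| ≤ ε → |deriv g u| ≤ δ := by
    have hcont : ContinuousAt (deriv g) 0 := (hg.continuous_deriv le_rfl).continuousAt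
    rcases Metric.continuousAt_iff.1 hcont δ hδpos with ⟨η, hηpos, hη⟩
    refine ⟨η / 2, by positivity, fun u hu => ?_⟩
    have : dist u 0 < η := by
      rw [Real.dist_eq, sub_zero]; linarith
    have := hη this
    rw [Real.dist_eq, hg'0, sub_zero] at this
    exact this.le
  -- |g u| ≤ δ|u| on [-ε, ε]
  have hgb : ∀ u : ℝ, |u| ≤ ε → |g u| ≤ δ * |u| := by
    intro u hu
    have hconv : Convex ℝ (Set.uIcc (0:ℝ) u) := convex_uIcc 0 u
    have hd : ∀ x ∈ Set.uIcc (0:ℝ) u, HasDerivWithinAt g (deriv g x) (Set.uIcc (0:ℝ) u) x :=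
      fun x _ => ((hg.differentiable one_ne_zero) x).hasDerivAt.hasDerivWithinAt
    have hbd : ∀ x ∈ Set.uIcc (0:ℝ) u, ‖deriv g x‖ ≤ δ := by
      intro x hx
      apply hgd
      rcases Set.mem_uIcc.1 hx with h | h
      · calc |x| ≤ |u| := by rw [abs_of_nonneg h.1]; exact le_trans h.2 (le_abs_self u)
          _ ≤ ε := hu
      · calc |x| ≤ |u| := by
              rw [abs_of_nonpos h.2]; exact le_trans (neg_le_neg h.1) (neg_le_abs u)
          _ ≤ ε := hu
    have := hconv.norm_image_sub_le_of_norm_hasDerivWithin_le hd hbd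
      (Set.left_mem_uIcc) (Set.right_mem_uIcc)
    simpa [hg0, Real.norm_eq_abs] using this
  refine ⟨ε, hεpos, ?_⟩
  intro j T hj hode hT hTlt hper hbound
  have hjd1 : Differentiable ℝ j := hj.differentiable (by norm_num)
  have hj' : ContDiff ℝ 1 (deriv j) := aux_contDiff_deriv hj
  have hjd : ∀ t, HasDerivAt j (deriv j t) t := fun t => (hjd1 t).hasDerivAt
  have hj'd : ∀ t, HasDerivAt (deriv j) (deriv (deriv j) t) t :=
    fun t => ((hj'.differentiable one_ne_zero) t).hasDerivAt
  have jc : Continuous j := hjd1.continuous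
  -- potential function
  set G : ℝ → ℝ := fun u => ∫ s in (0:ℝ)..u, g s with hGdef
  have hGd : ∀ u, HasDerivAt G (g u) u := by
    intro u
    exact intervalIntegral.integral_hasDerivAt_right
      ((hg.continuous).intervalIntegrable 0 u)
      ((hg.continuous).stronglyMeasurableAtFilter _ _)
      (hg.continuous).continuousAt
  have hG0 : G 0 = 0 := intervalIntegral.integral_same
  have hGb : ∀ u : ℝ, |u| ≤ ε → |G u| ≤ δ * u ^ 2 := by
    intro u hu
    have : ‖∫ s in (0:ℝ)..u, g s‖ ≤ δ * |u| * |u - 0| := by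
      apply intervalIntegral.norm_integral_le_of_norm_le_const
      intro x hx
      have hxu : |x| ≤ |u| := by
        rcases Set.mem_uIoc.1 hx with h | h
        · rw [abs_of_pos h.1]; exact le_trans h.2 (le_abs_self u)
        · rw [abs_of_nonpos h.2]; exact le_trans (neg_le_neg h.1.le) (neg_le_abs u)
      calc ‖g x‖ ≤ δ * |x| := hgb x (le_trans hxu hu)
        _ ≤ δ * |u| := by nlinarith
    rw [sub_zero] at this
    calc |G u| ≤ δ * |u| * |u| := this
      _ = δ * u ^ 2 := by rw [mul_assoc, abs_mul_abs_self]; ring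
  -- energy
  set E : ℝ → ℝ := fun t => (deriv j t) ^ 2 / 2 + c * (j t) ^ 2 / 2 + G (j t) with hEdef
  have hEd : ∀ t, HasDerivAt E 0 t := by
    intro t
    have h1 : HasDerivAt (fun t => (deriv j t) ^ 2 / 2)
        (deriv j t * deriv (deriv j) t) t := by
      have := ((hj'd t).pow 2).div_const 2
      refine this.congr_deriv ?_
      ring
    have h2 : HasDerivAt (fun t => c * (j t) ^ 2 / 2) (c * j t * deriv j t) t := by
      have := (((hjd t).pow 2).const_mul c).div_const 2
      refine this.congr_deriv ?_
      ring
    have h3 : HasDerivAt (fun t => G (j t)) (g (j t) * deriv j t) t :=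
      (hGd (j t)).comp t (hjd t)
    have h4 := (h1.add h2).add h3
    refine h4.congr_deriv (Eq.symm ?_)
    have h5 := hode t
    linear_combination (-(deriv j t)) * h5
  have hEconst : ∀ t s : ℝ, E t = E s :=
    fun t s => is_const_of_deriv_eq_zero (fun x => (hEd x).differentiableAt)
      (fun x => (hEd x).deriv) t s
  have hEge : ∀ t, c / 4 * (j t) ^ 2 ≤ E t := by
    intro t
    have h1 := hGb (j t) (hbound t).1
    have h2 := abs_le.1 h1
    have := sq_nonneg (deriv j t)
    simp only [hEdef, hδdef] at *
    nlinarith [h2.1]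
  -- double zero implies identically zero
  have hdouble : ∀ t0 : ℝ, j t0 = 0 → deriv j t0 = 0 → ∀ t, j t = 0 := by
    intro t0 h0 h0' t
    have hE0 : E t0 = 0 := by simp [hEdef, h0, h0', hG0]
    have h1 := hEge t
    rw [hEconst t t0, hE0] at h1
    have h2 : (j t) ^ 2 ≤ 0 := by nlinarith
    have h3 : (j t) ^ 2 = 0 := le_antisymm h2 (sq_nonneg _)
    exact pow_eq_zero_iff (by norm_num) |>.1 h3
  by_cases hA : ∃ t0, j t0 = 0 ∧ deriv j t0 = 0
  · obtain ⟨t0, h0, h0'⟩ := hA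
    exact hdouble t0 h0 h0'
  push_neg at hA
  by_contra hcon
  push_neg at hcon
  obtain ⟨s0, hs0⟩ := hcon
  -- global max and min
  obtain ⟨tM, _, hMax⟩ := (isCompact_Icc (a := (0:ℝ)) (b := T)).exists_isMaxOn
    ⟨0, by constructor <;> linarith⟩ jc.continuousOn
  obtain ⟨tm, _, hMin⟩ := (isCompact_Icc (a := (0:ℝ)) (b := T)).exists_isMinOn
    ⟨0, by constructor <;> linarith⟩ jc.continuousOn
  have hMglob : ∀ t, j t ≤ j tM := by
    intro t
    obtain ⟨y, hy, hxy⟩ := hper.exists_mem_Ico₀ hT t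
    rw [hxy]
    exact hMax ⟨hy.1, hy.2.le⟩
  have hmglob : ∀ t, j tm ≤ j t := by
    intro t
    obtain ⟨y, hy, hxy⟩ := hper.exists_mem_Ico₀ hT t
    rw [hxy]
    exact hMin ⟨hy.1, hy.2.le⟩
  have hM' : deriv j tM = 0 := by
    have : IsLocalMax j tM := Filter.Eventually.of_forall hMglob
    exact this.deriv_eq_zero
  have hm' : deriv j tm = 0 := by
    have : IsLocalMin j tm := Filter.Eventually.of_forall hmglob
    exact this.deriv_eq_zero
  -- j takes both positive and negative values
  have hboth : (∃ tp, 0 < j tp) ∧ (∃ tn, j tn < 0) := by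
    constructor
    · by_contra hno
      push_neg at hno
      -- j ≤ 0 everywhere
      have hMne : j tM ≠ 0 := fun h => hA tM h (hM')
      have hMneg : j tM < 0 := lt_of_le_of_ne (hno tM) hMne
      -- h function strictly anti on [-ε, 0]
      have hanti : StrictAntiOn (fun u => c * u ^ 2 / 2 + G u) (Set.Icc (-ε) 0) := by
        apply strictAntiOn_of_deriv_neg (convex_Icc _ _)
        · apply ContinuousOn.add
          · fun_prop
          · exact fun x _ => ((hGd x).differentiableAt.continuousAt).continuousWithinAt
        · intro u hu
          rw [interior_Icc] at hu
          have hd : HasDerivAt (fun u => c * u ^ 2 / 2 + G u) (c * u + g u) u := by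
            have h1 : HasDerivAt (fun u : ℝ => c * u ^ 2 / 2) (c * u) u := by
              have := (((hasDerivAt_id u).pow 2).const_mul c).div_const 2
              refine this.congr_deriv ?_
              simp only [id_eq]
              ring
            exact h1.add (hGd u)
          rw [hd.deriv]
          have hgu := abs_le.1 (hgb u (by rw [abs_of_neg hu.2]; linarith [hu.1]))
          rw [abs_of_neg hu.2] at hgu
          simp only [hδdef] at hgu
          nlinarith [hu.2, hgu.2]
      have hhe : (fun u => c * u ^ 2 / 2 + G u) (j tm) =
          (fun u => c * u ^ 2 / 2 + G u) (j tM) := by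
        have h1 : E tm = E tM := hEconst tm tM
        simp only [hEdef, hm', hM'] at h1
        simpa using h1
      have hmem1 : j tm ∈ Set.Icc (-ε) 0 := by
        constructor
        · linarith [abs_le.1 (hbound tm).1|>.1]
        · linarith [hmglob tM]
      have hmem2 : j tM ∈ Set.Icc (-ε) 0 := by
        constructor
        · linarith [abs_le.1 (hbound tM).1|>.1]
        · exact hMneg.le
      have heq : j tm = j tM := hanti.injOn hmem1 hmem2 hhe
      -- j is constant
      have hconst : ∀ t, j t = j tM := fun t => le_antisymm (hMglob t) (heq ▸ hmglob t)
      have hder0 : deriv (deriv j) tM = 0 := by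
        have : j = fun _ => j tM := funext hconst
        rw [this]
        simp
      have hgM := abs_le.1 (hgb (j tM) (hbound tM).1)
      rw [abs_of_neg hMneg] at hgM
      have := hode tM
      simp only [hδdef] at hgM
      nlinarith [hgM.1]
    · by_contra hno
      push_neg at hno
      -- j ≥ 0 everywhere
      have hmne : j tm ≠ 0 := fun h => hA tm h (hm')
      have hmpos : 0 < j tm := lt_of_le_of_ne (hno tm) (Ne.symm hmne)
      have hmono : StrictMonoOn (fun u => c * u ^ 2 / 2 + G u) (Set.Icc 0 ε) := by
        apply strictMonoOn_of_deriv_pos (convex_Icc _ _)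
        · apply ContinuousOn.add
          · fun_prop
          · exact fun x _ => ((hGd x).differentiableAt.continuousAt).continuousWithinAt
        · intro u hu
          rw [interior_Icc] at hu
          have hd : HasDerivAt (fun u => c * u ^ 2 / 2 + G u) (c * u + g u) u := by
            have h1 : HasDerivAt (fun u : ℝ => c * u ^ 2 / 2) (c * u) u := by
              have := (((hasDerivAt_id u).pow 2).const_mul c).div_const 2
              refine this.congr_deriv ?_
              simp only [id_eq]
              ring
            exact h1.add (hGd u)
          rw [hd.deriv]
          have hgu := abs_le.1 (hgb u (by rw [abs_of_pos hu.1]; linarith [hu.2]))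
          rw [abs_of_pos hu.1] at hgu
          simp only [hδdef] at hgu
          nlinarith [hu.1, hgu.1]
      have hhe : (fun u => c * u ^ 2 / 2 + G u) (j tm) =
          (fun u => c * u ^ 2 / 2 + G u) (j tM) := by
        have h1 : E tm = E tM := hEconst tm tM
        simp only [hEdef, hm', hM'] at h1
        simpa using h1
      have hmem1 : j tm ∈ Set.Icc (0:ℝ) ε := by
        constructor
        · exact hmpos.le
        · linarith [abs_le.1 (hbound tm).1|>.2]
      have hmem2 : j tM ∈ Set.Icc (0:ℝ) ε := by
        constructor
        · linarith [hno tM]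
        · linarith [abs_le.1 (hbound tM).1|>.2]
      have heq : j tm = j tM := hmono.injOn hmem1 hmem2 hhe
      have hconst : ∀ t, j t = j tM := fun t => le_antisymm (hMglob t) (heq ▸ hmglob t)
      have hder0 : deriv (deriv j) tM = 0 := by
        have : j = fun _ => j tM := funext hconst
        rw [this]
        simp
      have hMpos : 0 < j tM := lt_of_lt_of_le hmpos (hmglob tM)
      have hgM := abs_le.1 (hgb (j tM) (hbound tM).1)
      rw [abs_of_pos hMpos] at hgM
      have := hode tM
      simp only [hδdef] at hgM
      nlinarith [hgM.1]
  obtain ⟨⟨tp, htp⟩, ⟨tn, htn⟩⟩ := hboth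
  -- shift tn into (tp, tp + T)
  obtain ⟨tn', htn'mem, htn'val⟩ := hper.exists_mem_Ico hT tn tp
  have htn'neg : j tn' < 0 := htn'val ▸ htn
  have htn'gt : tp < tn' := by
    rcases lt_or_eq_of_le htn'mem.1 with h | h
    · exact h
    · rw [← h] at htn'neg; linarith
  have htn'lt : tn' < tp + T := htn'mem.2
  -- IVT helpers
  have ivt1 : ∀ x y : ℝ, x < y → j x < 0 → 0 < j y → ∃ z, z ∈ Set.Ioo x y ∧ j z = 0 := by
    intro x y hxy hx hy
    obtain ⟨z, hz, hz0⟩ := intermediate_value_Ioo hxy.le jc.continuousOn (⟨hx, hy⟩ :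
      (0:ℝ) ∈ Set.Ioo (j x) (j y))
    exact ⟨z, hz, hz0⟩
  have ivt2 : ∀ x y : ℝ, x < y → 0 < j x → j y < 0 → ∃ z, z ∈ Set.Ioo x y ∧ j z = 0 := by
    intro x y hxy hx hy
    obtain ⟨z, hz, hz0⟩ := intermediate_value_Ioo' hxy.le jc.continuousOn (⟨hy, hx⟩ :
      (0:ℝ) ∈ Set.Ioo (j y) (j x))
    exact ⟨z, hz, hz0⟩
  set Z : Set ℝ := {t | j t = 0} with hZdef
  have hZclosed : IsClosed Z := isClosed_eq jc continuous_const
  set S1 := Z ∩ Set.Icc (tn' - T) tp with hS1def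
  set S2 := Z ∩ Set.Icc tp tn' with hS2def
  set S3 := Z ∩ Set.Icc tn' (tp + T) with hS3def
  have hjtnT : j (tn' - T) < 0 := by rw [hper.sub_eq]; exact htn'neg
  have hjtpT : 0 < j (tp + T) := by rw [hper]; exact htp
  have hS1ne : S1.Nonempty := by
    obtain ⟨z, hz, hz0⟩ := ivt1 _ _ (by linarith) hjtnT htp
    exact ⟨z, hz0, ⟨hz.1.le, hz.2.le⟩⟩
  have hS2ne : S2.Nonempty := by
    obtain ⟨z, hz, hz0⟩ := ivt2 _ _ htn'gt htp htn'neg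
    exact ⟨z, hz0, ⟨hz.1.le, hz.2.le⟩⟩
  have hS3ne : S3.Nonempty := by
    obtain ⟨z, hz, hz0⟩ := ivt1 _ _ (by linarith) htn'neg hjtpT
    exact ⟨z, hz0, ⟨hz.1.le, hz.2.le⟩⟩
  have hS1c : IsClosed S1 := hZclosed.inter isClosed_Icc
  have hS2c : IsClosed S2 := hZclosed.inter isClosed_Icc
  have hS3c : IsClosed S3 := hZclosed.inter isClosed_Icc
  have hS1ba : BddAbove S1 := BddAbove.mono Set.inter_subset_right bddAbove_Icc
  have hS2ba : BddAbove S2 := BddAbove.mono Set.inter_subset_right bddAbove_Icc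
  have hS2bb : BddBelow S2 := BddBelow.mono Set.inter_subset_right bddBelow_Icc
  have hS3bb : BddBelow S3 := BddBelow.mono Set.inter_subset_right bddBelow_Icc
  set a1 := sSup S1 with ha1def
  set b1 := sInf S2 with hb1def
  set a2 := sSup S2 with ha2def
  set b2 := sInf S3 with hb2def
  have ha1mem : a1 ∈ S1 := hS1c.csSup_mem hS1ne hS1ba
  have hb1mem : b1 ∈ S2 := hS2c.csInf_mem hS2ne hS2bb
  have ha2mem : a2 ∈ S2 := hS2c.csSup_mem hS2ne hS2ba
  have hb2mem : b2 ∈ S3 := hS3c.csInf_mem hS3ne hS3bb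
  have ja1 : j a1 = 0 := ha1mem.1
  have jb1 : j b1 = 0 := hb1mem.1
  have ja2 : j a2 = 0 := ha2mem.1
  have jb2 : j b2 = 0 := hb2mem.1
  have ha1lt : a1 < tp := by
    rcases lt_or_eq_of_le ha1mem.2.2 with h | h
    · exact h
    · rw [h] at ja1; linarith
  have ha1ge : tn' - T ≤ a1 := ha1mem.2.1
  have hb1gt : tp < b1 := by
    rcases lt_or_eq_of_le hb1mem.2.1 with h | h
    · exact h
    · rw [← h] at jb1; linarith
  have hb1le : b1 ≤ tn' := hb1mem.2.2
  have ha2lt : a2 < tn' := by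
    rcases lt_or_eq_of_le ha2mem.2.2 with h | h
    · exact h
    · rw [h] at ja2; linarith
  have ha2ge : tp ≤ a2 := ha2mem.2.1
  have hb2gt : tn' < b2 := by
    rcases lt_or_eq_of_le hb2mem.2.1 with h | h
    · exact h
    · rw [← h] at jb2; linarith
  have hb2lt : b2 < tp + T := by
    rcases lt_or_eq_of_le hb2mem.2.2 with h | h
    · exact h
    · rw [h] at jb2; linarith
  have hb1a2 : b1 ≤ a2 := csInf_le hS2bb ha2mem
  have ha1b1 : a1 < b1 := lt_trans ha1lt hb1gt
  have ha2b2 : a2 < b2 := lt_trans ha2lt hb2gt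
  -- positivity on (a1, b1)
  have hpos1 : ∀ s ∈ Set.Ioo a1 b1, 0 < j s := by
    intro s hs
    rcases lt_trichotomy (j s) 0 with hneg | hzero | hpos
    · rcases lt_trichotomy s tp with hstp | hstp | hstp
      · obtain ⟨z, hz, hz0⟩ := ivt1 s tp hstp hneg htp
        have hzS1 : z ∈ S1 := ⟨hz0, ⟨by linarith [hz.1, hs.1], hz.2.le⟩⟩
        have := le_csSup hS1ba hzS1
        linarith [hz.1, hs.1]
      · rw [hstp] at hneg; linarith
      · obtain ⟨z, hz, hz0⟩ := ivt2 tp s hstp htp hneg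
        have hzS2 : z ∈ S2 := ⟨hz0, ⟨hz.1.le, by linarith [hz.2, hs.2]⟩⟩
        have := csInf_le hS2bb hzS2
        linarith [hz.2, hs.2]
    · by_cases hstp : s ≤ tp
      · have hzS1 : s ∈ S1 := ⟨hzero, ⟨by linarith [hs.1], hstp⟩⟩
        have := le_csSup hS1ba hzS1
        linarith [hs.1]
      · push_neg at hstp
        have hzS2 : s ∈ S2 := ⟨hzero, ⟨hstp.le, by linarith [hs.2]⟩⟩
        have := csInf_le hS2bb hzS2
        linarith [hs.2]
    · exact hpos
  -- negativity on (a2, b2)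
  have hneg2 : ∀ s ∈ Set.Ioo a2 b2, j s < 0 := by
    intro s hs
    rcases lt_trichotomy (j s) 0 with hneg | hzero | hpos
    · exact hneg
    · by_cases hstn : s ≤ tn'
      · have hne : s ≠ tn' := fun h => by rw [h] at hzero; linarith
        have hzS2 : s ∈ S2 := ⟨hzero, ⟨by linarith [hs.1], lt_of_le_of_ne hstn hne |>.le⟩⟩
        have := le_csSup hS2ba hzS2
        linarith [hs.1]
      · push_neg at hstn
        have hzS3 : s ∈ S3 := ⟨hzero, ⟨hstn.le, by linarith [hs.2]⟩⟩
        have := csInf_le hS3bb hzS3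
        linarith [hs.2]
    · rcases lt_trichotomy s tn' with hstn | hstn | hstn
      · obtain ⟨z, hz, hz0⟩ := ivt2 s tn' hstn hpos htn'neg
        have hzS2 : z ∈ S2 := ⟨hz0, ⟨by linarith [hz.1, hs.1], hz.2.le⟩⟩
        have := le_csSup hS2ba hzS2
        linarith [hz.1, hs.1]
      · rw [hstn] at hpos; linarith
      · obtain ⟨z, hz, hz0⟩ := ivt1 tn' s hstn htn'neg hpos
        have hzS3 : z ∈ S3 := ⟨hz0, ⟨hz.1.le, by linarith [hz.2, hs.2]⟩⟩
        have := csInf_le hS3bb hzS3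
        linarith [hz.2, hs.2]
  -- derivative signs at right endpoints
  have hb1d : deriv j b1 < 0 :=
    lt_of_le_of_ne (aux_deriv_nonpos_left (hjd1 b1) ha1b1 jb1 hpos1) (hA b1 jb1)
  have hnegderiv : ∀ x : ℝ, deriv (fun t => -(j t)) x = -(deriv j x) := by
    intro x
    exact deriv.neg
  have hb2d : 0 < deriv j b2 := by
    have h1 : deriv (fun t => -(j t)) b2 ≤ 0 := by
      apply aux_deriv_nonpos_left (hjd1 b2).neg ha2b2 (by simp [jb2])
      intro s hs
      simpa using hneg2 s hs
    rw [hnegderiv] at h1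
    have h2 : deriv j b2 ≠ 0 := hA b2 jb2
    rcases lt_or_eq_of_le (neg_nonpos.1 h1) with h | h
    · exact h
    · exact absurd h.symm h2
  -- Sturm comparison
  set ω := Real.sqrt (c + δ) with hωdef
  have hωpos : 0 < ω := Real.sqrt_pos.2 (by positivity)
  have hωsq : ω ^ 2 = c + δ := Real.sq_sqrt (by positivity)
  have hlen1 : Real.pi / ω ≤ b1 - a1 := by
    by_contra hlt
    push_neg at hlt
    refine aux_sturm hωpos hj ha1b1 hlt ja1 jb1 ?_ hb1d
    intro t ht
    have hjt : 0 ≤ j t := by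
      rcases eq_or_lt_of_le ht.1 with h | h
      · simp [← h, ja1]
      · rcases eq_or_lt_of_le ht.2 with h2 | h2
        · simp [h2, jb1]
        · exact (hpos1 t ⟨h, h2⟩).le
    have h5 := hode t
    have hgt := abs_le.1 (hgb (j t) (hbound t).1)
    rw [abs_of_nonneg hjt] at hgt
    rw [hωsq]
    simp only [hδdef] at hgt ⊢
    linarith [hgt.2, h5]
  have hlen2 : Real.pi / ω ≤ b2 - a2 := by
    by_contra hlt
    push_neg at hlt
    refine aux_sturm hωpos hj.neg ha2b2 hlt (by simp [ja2]) (by simp [jb2]) ?_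
      (by rw [hnegderiv]; linarith)
    intro t ht
    have hd2 : deriv (deriv (fun t => -(j t))) t = -(deriv (deriv j) t) := by
      have h1 : (deriv fun t => -(j t)) = fun t => -(deriv j t) :=
        funext fun x => hnegderiv x
      rw [h1]
      exact deriv.neg
    rw [hd2]
    have hjt : j t ≤ 0 := by
      rcases eq_or_lt_of_le ht.1 with h | h
      · simp [← h, ja2]
      · rcases eq_or_lt_of_le ht.2 with h2 | h2
        · simp [h2, jb2]
        · exact (hneg2 t ⟨h, h2⟩).le
    have h5 := hode t
    have hgt := abs_le.1 (hgb (j t) (hbound t).1)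
    rw [abs_of_nonpos hjt] at hgt
    rw [hωsq]
    simp only [hδdef] at hgt ⊢
    linarith [hgt.1, h5]
  -- sum of arc lengths vs T
  have hb2T : b2 - T ≤ a1 := by
    have hmem : b2 - T ∈ S1 := by
      refine ⟨?_, ⟨by linarith, by linarith⟩⟩
      show j (b2 - T) = 0
      rw [hper.sub_eq]
      exact jb2
    exact le_csSup hS1ba hmem
  have hsqrtc : 0 < Real.sqrt c := Real.sqrt_pos.2 hc
  have hωlt : ω < 2 * Real.sqrt c := by
    rw [hωdef, hδdef]
    exact aux_omega hc
  have hπpos := Real.pi_pos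
  have h1 : Real.pi / (2 * Real.sqrt c) < Real.pi / ω :=
    div_lt_div_of_pos_left hπpos hωpos hωlt
  have h2 : Real.pi / Real.sqrt c = 2 * (Real.pi / (2 * Real.sqrt c)) := by
    field_simp
  linarith [hlen1, hlen2, hb1a2, hb2T, hTlt]
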